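/- arXiv:0912.1922 — 3 statements merged into one kernel-verified Lean document; each statement's English description precedes it below -/
import Mathlib

section
/- Let π be a set of primes, G a finite group, A a normal subgroup of G, and M a subgroup of G containing A such that the order of M/A is a π-number. Then there exists a subgroup H of G whose order is a π-number and such that HA = M. -/
/-- `n` is a `π`-number: every prime dividing `n` lies in `π`. -/
def IsPiNumber (π : Set ℕ) (n : ℕ) : Prop :=
  ∀ p : ℕ, p.Prime → p ∣ n → p ∈ π

/-- `H` is a `π`-Hall subgroup of `G`: its order is a `π`-number and no prime
in `π` divides its index. -/
def IsHallPi (π : Set ℕ) {G : Type*} [Group G] (H : Subgroup G) : Prop :=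
  IsPiNumber π (Nat.card H) ∧ ∀ p ∈ π, p.Prime → ¬ p ∣ H.index

/-- The conjugate `g K g⁻¹` of a subgroup `K`. -/
def conjSub {G : Type*} [Group G] (g : G) (K : Subgroup G) : Subgroup G :=
  K.map (MulAut.conj g).toMonoidHom

lemma card_map_subtype {G : Type*} [Group G] (H : Subgroup G) (K : Subgroup H) :
    Nat.card (K.map H.subtype) = Nat.card K :=
  (Nat.card_congr (K.equivMapOfInjective H.subtype H.subtype_injective).toEquiv).symm

/-- If `A` is a normal subgroup of a finite group `G`, `M` is a subgroup of
`G` containing `A`, and the order of `M/A` is a `π`-number, then there is a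
subgroup `H` of `G` whose order is a `π`-number with `HA = M`. -/
theorem stmt_5 (π : Set ℕ) (G : Type*) [Group G] [Finite G]
    (A M : Subgroup G) (hA : A.Normal) (hAM : A ≤ M)
    (hMA : IsPiNumber π (A.subgroupOf M).index) :
    ∃ H : Subgroup G, IsPiNumber π (Nat.card H) ∧ H ⊔ A = M := by
  suffices h : ∀ n (H : Subgroup G), Nat.card H = n → H ⊔ A = M →
      ∃ H' : Subgroup G, IsPiNumber π (Nat.card H') ∧ H' ⊔ A = M by
    exact h (Nat.card M) M rfl (sup_of_le_left hAM)
  intro n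
  induction n using Nat.strong_induction_on with
  | _ n ih =>
  intro H hn hsup
  by_cases hH : IsPiNumber π (Nat.card H)
  · exact ⟨H, hH, hsup⟩
  simp only [IsPiNumber, not_forall] at hH
  obtain ⟨p, hp, hpdvd, hpπ⟩ := hH
  haveI : Fact p.Prime := ⟨hp⟩
  -- the index of `A ⊓ H` in `H` equals the index of `A` in `M`
  have hrel : A.relIndex H = (A.subgroupOf M).index := by
    show A.relIndex H = A.relIndex M
    rw [← hsup, sup_comm, Subgroup.relIndex_sup_left]
  have hnd : ¬ p ∣ (A.subgroupOf H).index := fun hd => hpπ (hMA p hp (hrel ▸ hd))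
  -- hence p divides the order of `A ⊓ H`
  have hpA : p ∣ Nat.card (A.subgroupOf H) := by
    have hcard : Nat.card (A.subgroupOf H) * (A.subgroupOf H).index = Nat.card H :=
      Subgroup.card_mul_index _
    rcases (Nat.Prime.dvd_mul hp).mp (hcard ▸ hpdvd) with h | h
    exacts [h, absurd h hnd]
  set N := A.subgroupOf H with hNdef
  haveI : N.Normal := hA.subgroupOf H
  obtain ⟨P⟩ : Nonempty (Sylow p N) := inferInstance
  set P' : Subgroup H := (P : Subgroup N).map N.subtype with hP'def
  have hfrattini : Subgroup.normalizer (P' : Set H) ⊔ N = ⊤ := Sylow.normalizer_sup_eq_top P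
  -- p divides card P'
  have hPne : ¬ p ∣ ((P : Subgroup N).index) :=
    Sylow.not_dvd_index' P (Nat.card_pos).ne'
  have hpP' : p ∣ Nat.card P' := by
    rw [card_map_subtype]
    have hcard : Nat.card (P : Subgroup N) * (P : Subgroup N).index = Nat.card N :=
      Subgroup.card_mul_index _
    rcases (Nat.Prime.dvd_mul hp).mp (hcard ▸ hpA) with h | h
    exacts [h, absurd h hPne]
  -- map of N along subtype lies below A
  have hNmap : N.map H.subtype ≤ A := by
    rw [hNdef, Subgroup.subgroupOf_map_subtype]
    exact inf_le_left
  have hP'le : P'.map H.subtype ≤ A :=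
    le_trans (Subgroup.map_mono (Subgroup.map_subtype_le _)) hNmap
  by_cases hnorm : Subgroup.normalizer (P' : Set H) = ⊤
  · -- P' is normal in H; Schur-Zassenhaus gives a complement K
    haveI : P'.Normal := Subgroup.normalizer_eq_top_iff.mp hnorm
    have hco : Nat.Coprime (Nat.card P') P'.index := by
      have hnd2 : ¬ p ∣ P'.index := by
        intro hd
        have h1 : P' ≤ N := Subgroup.map_subtype_le _
        rw [← Subgroup.relIndex_mul_index h1] at hd
        rcases (Nat.Prime.dvd_mul hp).mp hd with h | h
        · apply hPne
          have heq : P'.relIndex N = (P : Subgroup N).index := by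
            show (Subgroup.comap N.subtype (Subgroup.map N.subtype (P : Subgroup N))).index
              = (P : Subgroup N).index
            rw [Subgroup.comap_map_eq_self_of_injective N.subtype_injective]
          rwa [heq] at h
        · exact hnd h
      obtain ⟨k, hk⟩ := IsPGroup.iff_card.mp (P.2.map N.subtype)
      rw [hk]
      exact Nat.Coprime.pow_left _ ((Nat.Prime.coprime_iff_not_dvd hp).mpr hnd2)
    obtain ⟨K, hK⟩ := Subgroup.exists_right_complement'_of_coprime hco
    have hKcard : Nat.card K < n := by
      rw [← hn, ← hK.symm.index_eq_card]
      have h1 : Nat.card P' * P'.index = Nat.card H := Subgroup.card_mul_index _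
      have h2 : 1 < Nat.card P' :=
        lt_of_lt_of_le hp.one_lt (Nat.le_of_dvd Nat.card_pos hpP')
      calc P'.index = 1 * P'.index := (one_mul _).symm
        _ < Nat.card P' * P'.index :=
            (Nat.mul_lt_mul_right (Nat.pos_of_ne_zero Subgroup.index_ne_zero_of_finite)).mpr h2
        _ = Nat.card H := h1
    have hKsup : (K.map H.subtype) ⊔ A = M := by
      have h1 : (K.map H.subtype) ⊔ (P'.map H.subtype) = H := by
        rw [← Subgroup.map_sup, sup_comm, hK.sup_eq_top, ← MonoidHom.range_eq_map,
          Subgroup.range_subtype]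
      have h2 : (K.map H.subtype) ⊔ A = ((K.map H.subtype) ⊔ (P'.map H.subtype)) ⊔ A := by
        rw [sup_assoc, sup_of_le_right hP'le]
      rw [h2, h1, hsup]
    refine ih (Nat.card (K.map H.subtype)) ?_ _ rfl hKsup
    rwa [card_map_subtype]
  · -- the normalizer is proper; it still generates M together with A
    set K := (Subgroup.normalizer (P' : Set H)).map H.subtype with hKdef
    have hKcard : Nat.card K < n := by
      rw [← hn, hKdef, card_map_subtype]
      refine lt_of_le_of_ne (Subgroup.card_le_card_group _) fun h => ?_
      exact hnorm (Subgroup.eq_top_of_card_eq _ h)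
    have hKsup : K ⊔ A = M := by
      have h1 : K ⊔ (N.map H.subtype) = H := by
        rw [hKdef, ← Subgroup.map_sup, hfrattini, ← MonoidHom.range_eq_map,
          Subgroup.range_subtype]
      have h2 : K ⊔ A = (K ⊔ (N.map H.subtype)) ⊔ A := by
        rw [sup_assoc, sup_of_le_right hNmap]
      rw [h2, h1, hsup]
    exact ih (Nat.card K) hKcard K rfl hKsup
end

section
/- Let π be a set of primes, G a finite group, and A a normal subgroup of G such that A satisfies E_π and every prime divisor of |G/A| lies in π. Let H be a π-Hall subgroup of A. Then there exists a π-Hall subgroup K of G with K ∩ A = H if and only if for every g ∈ G there exists a ∈ A with g⁻¹Hg = a⁻¹Ha (i.e., the A-conjugacy class of H coincides with its G-conjugacy class). -/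
/-- `G` satisfies `E_π`: it possesses a `π`-Hall subgroup. -/
def EPi (π : Set ℕ) (G : Type*) [Group G] : Prop :=
  ∃ H : Subgroup G, IsHallPi π H

/-- `G` satisfies `C_π`: it satisfies `E_π` and any two `π`-Hall subgroups
of `G` are conjugate in `G`. -/
def CPi (π : Set ℕ) (G : Type*) [Group G] : Prop :=
  EPi π G ∧ ∀ H K : Subgroup G, IsHallPi π H → IsHallPi π K → ∃ g : G, conjSub g H = K

/-- `G` satisfies `D_π`: it satisfies `C_π` and every `π`-subgroup of `G` is
contained in some `π`-Hall subgroup of `G`. -/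
def DPi (π : Set ℕ) (G : Type*) [Group G] : Prop :=
  CPi π G ∧ ∀ K : Subgroup G, IsPiNumber π (Nat.card K) →
    ∃ H : Subgroup G, IsHallPi π H ∧ K ≤ H

open scoped Pointwise

section Helpers

variable {G₀ : Type*} [Group G₀]

lemma mem_conjSub {g x : G₀} {K : Subgroup G₀} :
    x ∈ conjSub g K ↔ g⁻¹ * x * g ∈ K := by
  simp only [conjSub, Subgroup.mem_map, MulEquiv.coe_toMonoidHom, MulAut.conj_apply]
  constructor
  · rintro ⟨y, hy, rfl⟩
    have h : g⁻¹ * (g * y * g⁻¹) * g = y := by group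
    rwa [h]
  · intro h
    exact ⟨g⁻¹ * x * g, h, by group⟩

lemma conjSub_conjSub (g₁ g₂ : G₀) (K : Subgroup G₀) :
    conjSub g₁ (conjSub g₂ K) = conjSub (g₁ * g₂) K := by
  ext x
  rw [mem_conjSub, mem_conjSub, mem_conjSub]
  have h : g₂⁻¹ * (g₁⁻¹ * x * g₁) * g₂ = (g₁ * g₂)⁻¹ * x * (g₁ * g₂) := by group
  rw [h]

lemma conjSub_one (K : Subgroup G₀) : conjSub 1 K = K := by
  ext x
  rw [mem_conjSub]
  simp

lemma mem_normalizer_of_conjSub_eq {g : G₀} {K : Subgroup G₀}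
    (h : conjSub g K = K) : g ∈ Subgroup.normalizer (K : Set G₀) := by
  rw [Subgroup.mem_normalizer_iff'']
  intro x
  constructor
  · intro hx
    rw [← h] at hx
    exact mem_conjSub.mp hx
  · intro hx
    rw [← h]
    exact mem_conjSub.mpr hx

end Helpers

/-- Let `A` be a normal subgroup of a finite group `G` such that `A ∈ E_π` and
every prime divisor of `|G/A|` lies in `π`, and let `H` be a `π`-Hall subgroup
of `A`. Then `H = K ∩ A` for some `π`-Hall subgroup `K` of `G` if and only if
for every `g ∈ G` there is `a ∈ A` with `g⁻¹Hg = a⁻¹Ha`. -/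
theorem stmt_7 (π : Set ℕ) (G : Type*) [Group G] [Finite G]
    (A : Subgroup G) (hA : A.Normal) (hAE : EPi π A)
    (hGA : IsPiNumber π A.index)
    (H : Subgroup A) (hH : IsHallPi π H) :
    (∃ K : Subgroup G, IsHallPi π K ∧ K ⊓ A = H.map A.subtype) ↔
    (∀ g : G, ∃ a ∈ A,
      conjSub g⁻¹ (H.map A.subtype) = conjSub a⁻¹ (H.map A.subtype)) := by
  classical
  haveI := hA
  set H' : Subgroup G := H.map A.subtype with hH'def
  have hH'A : H' ≤ A := Subgroup.map_subtype_le H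
  have hcardH' : Nat.card H' = Nat.card H :=
    (Nat.card_congr (Subgroup.equivMapOfInjective H A.subtype A.subtype_injective).toEquiv).symm
  have hsubOf : H'.subgroupOf A = H :=
    Subgroup.comap_map_eq_self_of_injective A.subtype_injective H
  have hrelH' : H'.relIndex A = H.index := by
    show (H'.subgroupOf A).index = H.index
    rw [hsubOf]
  constructor
  · -- forward direction
    rintro ⟨K, hK, hKA⟩ g
    have hsup : K ⊔ A = ⊤ := by
      rw [← Subgroup.index_eq_one]
      by_contra hne
      set p := (K ⊔ A).index.minFac with hpdef
      have hp : p.Prime := Nat.minFac_prime hne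
      have h1 : p ∣ A.index :=
        (Nat.minFac_dvd _).trans (Subgroup.index_dvd_of_le le_sup_right)
      have h2 : p ∣ K.index :=
        (Nat.minFac_dvd _).trans (Subgroup.index_dvd_of_le le_sup_left)
      exact hK.2 p (hGA p hp h1) hp h2
    have hg : g ∈ (K : Set G) * (A : Set G) := by
      rw [← Subgroup.mul_normal K A, hsup]
      exact Set.mem_univ g
    obtain ⟨k, hk0, a, ha0, hka⟩ := hg
    have hk : k ∈ K := hk0
    have ha : a ∈ A := ha0
    refine ⟨a, ha, ?_⟩
    ext x
    rw [mem_conjSub, mem_conjSub, inv_inv, inv_inv, ← hKA]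
    have hrw : g * x * g⁻¹ = k * (a * x * a⁻¹) * k⁻¹ := by
      rw [← hka]; group
    rw [hrw, Subgroup.mem_inf, Subgroup.mem_inf]
    constructor
    · rintro ⟨h1, h2⟩
      constructor
      · have h3 : k⁻¹ * (k * (a * x * a⁻¹) * k⁻¹) * k ∈ K :=
          mul_mem (mul_mem (inv_mem hk) h1) hk
        have h4 : k⁻¹ * (k * (a * x * a⁻¹) * k⁻¹) * k = a * x * a⁻¹ := by group
        rwa [h4] at h3
      · have h3 := hA.conj_mem _ h2 k⁻¹
        have h4 : k⁻¹ * (k * (a * x * a⁻¹) * k⁻¹) * k⁻¹⁻¹ = a * x * a⁻¹ := by group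
        rwa [h4] at h3
    · rintro ⟨h1, h2⟩
      exact ⟨mul_mem (mul_mem hk h1) (inv_mem hk), hA.conj_mem _ h2 k⟩
  · -- backward direction
    intro hcond
    have hH'N : H' ≤ Subgroup.normalizer (H' : Set G) := Subgroup.le_normalizer
    set N := Subgroup.normalizer (H' : Set G) with hNdef
    have hsup : N ⊔ A = ⊤ := by
      rw [Subgroup.eq_top_iff']
      intro g
      obtain ⟨a, ha, hconj⟩ := hcond g
      have h1 : conjSub (a * g⁻¹) H' = H' := by
        have h := congrArg (conjSub a) hconj
        rwa [conjSub_conjSub, conjSub_conjSub, mul_inv_cancel, conjSub_one] at h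
      have h2 : a * g⁻¹ ∈ N := mem_normalizer_of_conjSub_eq h1
      have h3 : g = (a * g⁻¹)⁻¹ * a := by group
      rw [h3]
      exact Subgroup.mul_mem_sup (inv_mem h2) ha
    set H'' : Subgroup N := H'.subgroupOf N with hH''def
    haveI hH''norm : H''.Normal := Subgroup.normal_in_normalizer
    set φ : N →* N ⧸ H'' := QuotientGroup.mk' H'' with hφdef
    have hφsurj : Function.Surjective φ := QuotientGroup.mk'_surjective H''
    have hφker : φ.ker = H'' := QuotientGroup.ker_mk' H''
    set S : Subgroup N := A.subgroupOf N with hSdef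
    haveI hSnorm : S.Normal := Subgroup.normal_subgroupOf
    have hSeq : S = (A ⊓ N).subgroupOf N := by
      ext x
      simp only [hSdef, Subgroup.mem_subgroupOf, Subgroup.mem_inf]
      exact ⟨fun h => ⟨h, x.2⟩, fun h => h.1⟩
    have hH'AN : H' ≤ A ⊓ N := le_inf hH'A hH'N
    have hr : H'.relIndex (A ⊓ N) * (A ⊓ N).relIndex A = H.index := by
      rw [Subgroup.relIndex_mul_relIndex H' (A ⊓ N) A hH'AN inf_le_left, hrelH']
    set Abar : Subgroup (N ⧸ H'') := S.map φ with hAbardef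
    haveI hAbarnorm : Abar.Normal := hSnorm.map φ hφsurj
    have hH''S : H'' ≤ S := fun x hx => hH'A hx
    set f : S →* N ⧸ H'' := φ.comp S.subtype with hfdef
    have hfrange : f.range = Abar := by
      rw [hfdef, MonoidHom.range_comp, Subgroup.range_subtype]
    have hfker : f.ker = H''.subgroupOf S := by
      rw [hfdef, ← MonoidHom.comap_ker, hφker]
      rfl
    have hcardAbar : Nat.card Abar = H'.relIndex (A ⊓ N) := by
      have e1 : Nat.card Abar = Nat.card f.range := by rw [hfrange]
      have e2 : Nat.card f.range = Nat.card (S ⧸ f.ker) :=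
        (Nat.card_congr (QuotientGroup.quotientKerEquivRange f).toEquiv).symm
      have e3 : Nat.card (S ⧸ f.ker) = f.ker.index := (Subgroup.index_eq_card _).symm
      rw [e1, e2, e3, hfker]
      show (H''.subgroupOf S).index = _
      have e4 : H''.relIndex S = H'.relIndex (A ⊓ N) := by
        rw [hSeq, hH''def, Subgroup.relIndex_subgroupOf inf_le_right]
      exact e4
    have hAbarIndex : Abar.index = S.index := by
      rw [hAbardef, Subgroup.index_map, hφker, sup_of_le_left hH''S,
        φ.range_eq_top_of_surjective hφsurj, Subgroup.index_top, mul_one]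
    have hSindex : S.index = A.index := by
      have e := QuotientGroup.quotientInfEquivProdNormalQuotient N A
      have e1 : S.index = Nat.card (N ⧸ A.subgroupOf N) := Subgroup.index_eq_card _
      have e2 : Nat.card (N ⧸ A.subgroupOf N)
          = Nat.card ((↥(N ⊔ A)) ⧸ A.subgroupOf (N ⊔ A)) := Nat.card_congr e.toEquiv
      have e3 : Nat.card ((↥(N ⊔ A)) ⧸ A.subgroupOf (N ⊔ A)) = A.relIndex (N ⊔ A) :=
        (Subgroup.index_eq_card _).symm
      rw [e1, e2, e3, hsup, Subgroup.relIndex_top_right]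
    have hdvd1 : Nat.card Abar ∣ H.index := by
      rw [hcardAbar]
      exact ⟨(A ⊓ N).relIndex A, hr.symm⟩
    have hcop : Nat.Coprime (Nat.card Abar) Abar.index := by
      by_contra hnc
      have hp : (Nat.gcd (Nat.card Abar) Abar.index).minFac.Prime := Nat.minFac_prime hnc
      set p := (Nat.gcd (Nat.card Abar) Abar.index).minFac with hpdef
      have hp1 : p ∣ Nat.card Abar := (Nat.minFac_dvd _).trans (Nat.gcd_dvd_left _ _)
      have hp2 : p ∣ Abar.index := (Nat.minFac_dvd _).trans (Nat.gcd_dvd_right _ _)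
      have hmem : p ∈ π := hGA p hp (by rwa [hAbarIndex, hSindex] at hp2)
      exact hH.2 p hmem hp (hp1.trans hdvd1)
    obtain ⟨Kbar, hKbar⟩ := Subgroup.exists_right_complement'_of_coprime hcop
    set K₀ : Subgroup N := Kbar.comap φ with hK₀def
    set K : Subgroup G := K₀.map N.subtype with hKdef
    have hH''K₀ : H'' ≤ K₀ := by
      have h := Subgroup.ker_le_comap (f := φ) Kbar
      rwa [hφker] at h
    have hH'K : H' ≤ K := by
      have h1 : H''.map N.subtype = H' := by
        rw [hH''def, Subgroup.subgroupOf_map_subtype, inf_eq_left.mpr hH'N]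
      rw [hKdef, ← h1]
      exact Subgroup.map_mono hH''K₀
    have hK₀index : K₀.index = Nat.card Abar := by
      rw [hK₀def, Kbar.index_comap_of_surjective hφsurj, hKbar.index_eq_card]
    -- N.index = (A ⊓ N).relIndex A
    have hNindex : N.index = (A ⊓ N).relIndex A := by
      have c1 : Nat.card N * N.index = Nat.card G := Subgroup.card_mul_index N
      have c2 : Nat.card A * A.index = Nat.card G := Subgroup.card_mul_index A
      have c3 : Nat.card ((A ⊓ N).subgroupOf N) * ((A ⊓ N).subgroupOf N).index
          = Nat.card N := Subgroup.card_mul_index _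
      have c4 : Nat.card ((A ⊓ N).subgroupOf A) * ((A ⊓ N).subgroupOf A).index
          = Nat.card A := Subgroup.card_mul_index _
      have c5 : Nat.card ((A ⊓ N).subgroupOf N) = Nat.card (A ⊓ N : Subgroup G) :=
        Nat.card_congr (Subgroup.subgroupOfEquivOfLe inf_le_right).toEquiv
      have c6 : Nat.card ((A ⊓ N).subgroupOf A) = Nat.card (A ⊓ N : Subgroup G) :=
        Nat.card_congr (Subgroup.subgroupOfEquivOfLe inf_le_left).toEquiv
      have c7 : ((A ⊓ N).subgroupOf N).index = A.index := by
        rw [← hSeq]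
        exact hSindex
      have k1 : Nat.card (A ⊓ N : Subgroup G) * A.index = Nat.card N := by
        rw [← c5, ← c7]
        exact c3
      have k2 : Nat.card (A ⊓ N : Subgroup G) * (A ⊓ N).relIndex A = Nat.card A := by
        rw [← c6]
        exact c4
      have k3 : Nat.card (A ⊓ N : Subgroup G) * (A.index * N.index)
          = Nat.card (A ⊓ N : Subgroup G) * ((A ⊓ N).relIndex A * A.index) := by
        rw [← mul_assoc, ← mul_assoc, k1, k2, c1, c2]
      have k4 : A.index * N.index = (A ⊓ N).relIndex A * A.index :=
        Nat.eq_of_mul_eq_mul_left Nat.card_pos k3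
      have k5 : N.index * A.index = (A ⊓ N).relIndex A * A.index := by
        rw [mul_comm N.index]
        exact k4
      have hA0 : 0 < A.index := Nat.pos_of_ne_zero Subgroup.index_ne_zero_of_finite
      exact Nat.eq_of_mul_eq_mul_right hA0 k5
    have hKindex : K.index = H.index := by
      rw [hKdef, Subgroup.index_map_subtype, hK₀index, hcardAbar, hNindex, hr]
    have hcardK : Nat.card K = Nat.card H * A.index := by
      have d1 : Nat.card K * K.index = Nat.card G := Subgroup.card_mul_index K
      have d2 : Nat.card H * H.index = Nat.card A := Subgroup.card_mul_index H
      have d3 : Nat.card A * A.index = Nat.card G := Subgroup.card_mul_index A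
      have hH0 : 0 < H.index := Nat.pos_of_ne_zero Subgroup.index_ne_zero_of_finite
      apply Nat.eq_of_mul_eq_mul_right hH0
      calc Nat.card K * H.index = Nat.card K * K.index := by rw [hKindex]
        _ = Nat.card G := d1
        _ = Nat.card A * A.index := d3.symm
        _ = Nat.card H * H.index * A.index := by rw [d2]
        _ = Nat.card H * A.index * H.index := by ring
    refine ⟨K, ⟨?_, ?_⟩, ?_⟩
    · intro p hp hdvd
      rw [hcardK] at hdvd
      rcases (Nat.Prime.dvd_mul hp).mp hdvd with h | h
      · exact hH.1 p hp h
      · exact hGA p hp h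
    · intro p hpπ hp hdvd
      rw [hKindex] at hdvd
      exact hH.2 p hpπ hp hdvd
    · apply le_antisymm
      · rintro x ⟨hxK, hxA⟩
        obtain ⟨y, hy, rfl⟩ := Subgroup.mem_map.mp hxK
        have hyS : y ∈ S := hxA
        have h1 : φ y ∈ Abar := Subgroup.mem_map.mpr ⟨y, hyS, rfl⟩
        have h2 : φ y ∈ Kbar := hy
        have h3 : φ y ∈ (⊥ : Subgroup (N ⧸ H'')) := hKbar.disjoint.le_bot ⟨h1, h2⟩
        have h4 : y ∈ H'' := by
          rw [← hφker]
          exact MonoidHom.mem_ker.mpr (Subgroup.mem_bot.mp h3)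
        exact h4
      · exact le_inf hH'K hH'A
end

section
/- Let r and p be distinct odd primes, let q = p^α for some integer α ≥ 1, and let m be an integer with m ≥ (r+1)/2. Then the r-part of the product (q²−1)(q⁴−1)⋯(q^{2(m−1)}−1) is strictly greater than the r-part of m!. -/
/-- The `p`-part of a positive integer `m`: the largest power of `p`
dividing `m`. -/
def pPart (p m : ℕ) : ℕ := p ^ m.factorization p

/-- If `r, p` are distinct odd primes, `q = p^α` with `α ≥ 1`, and
`m ≥ (r+1)/2`, then the `r`-part of `(q²−1)(q⁴−1)⋯(q^{2(m−1)}−1)` is strictly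
greater than the `r`-part of `m!`. -/
theorem stmt_12 (r p : ℕ) (hr : r.Prime) (hp : p.Prime)
    (hrodd : Odd r) (hpodd : Odd p) (hrp : r ≠ p)
    (α : ℕ) (hα : 1 ≤ α) (q : ℕ) (hq : q = p ^ α)
    (m : ℕ) (hm : (r + 1) / 2 ≤ m) :
    pPart r (Nat.factorial m) <
      pPart r (∏ i ∈ Finset.Icc 1 (m - 1), (q ^ (2 * i) - 1)) := by
  haveI : Fact r.Prime := ⟨hr⟩
  have hr2 : r ≠ 2 := by rintro rfl; exact (by decide : ¬ Odd 2) hrodd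
  have hr3 : 3 ≤ r := by have := hr.two_le; omega
  have hrodd' : r % 2 = 1 := Nat.odd_iff.mp hrodd
  have hq2 : 1 < q := by
    rw [hq]; exact Nat.one_lt_pow (by omega) hp.one_lt
  have hrq : ¬ r ∣ q := by
    rw [hq]
    intro h
    exact hrp ((Nat.prime_dvd_prime_iff_eq hr hp).mp (hr.dvd_of_dvd_pow h))
  -- order of q^2 mod r
  have hq0 : (q : ZMod r) ≠ 0 := fun h => hrq ((ZMod.natCast_eq_zero_iff q r).mp h)
  set d := orderOf ((q : ZMod r) ^ 2) with hd
  have hpow : ((q : ZMod r) ^ 2) ^ ((r - 1) / 2) = 1 := by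
    rw [← pow_mul, show 2 * ((r - 1) / 2) = r - 1 by omega]
    exact ZMod.pow_card_sub_one_eq_one hq0
  have hdvd2 : d ∣ (r - 1) / 2 := orderOf_dvd_of_pow_eq_one hpow
  have hhalf : 1 ≤ (r - 1) / 2 := by omega
  have hd_pos : 0 < d := Nat.pos_of_dvd_of_pos hdvd2 hhalf
  have hd_le : 2 * d ≤ r - 1 := by
    have := Nat.le_of_dvd hhalf hdvd2
    omega
  set a := q ^ (2 * d) with ha
  have ha1 : 1 < a := Nat.one_lt_pow (by omega) hq2
  have hra : ¬ r ∣ a := fun h => hrq (hr.dvd_of_dvd_pow h)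
  have hdvd : r ∣ a - 1 := by
    have h1 : (a : ZMod r) = 1 := by
      rw [ha]; push_cast
      rw [pow_mul, hd, pow_orderOf_eq_one]
    have h2 : ((a - 1 : ℕ) : ZMod r) = 0 := by
      rw [Nat.cast_sub ha1.le, h1, Nat.cast_one, sub_self]
    exact (ZMod.natCast_eq_zero_iff _ _).mp h2
  set c := padicValNat r (a - 1) with hc
  have hc1 : 1 ≤ c := one_le_padicValNat_of_dvd (by omega) hdvd
  -- lifting the exponent
  have key : ∀ j : ℕ, j ≠ 0 → padicValNat r (a ^ j - 1) = c + padicValNat r j := by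
    intro j hj
    have := padicValNat.pow_sub_pow (p := r) hrodd (x := a) (y := 1) ha1
      (by simpa using hdvd) hra hj
    simpa using this
  set N := (m - 1) / d with hN
  have hdm : d ≤ m - 1 := by omega
  have hN1 : 1 ≤ N := (Nat.one_le_div_iff hd_pos).mpr hdm
  -- value of N!
  have hfa : ∀ n : ℕ, n.factorization r = padicValNat r n := fun n => Nat.factorization_def n hr
  have hNfac : padicValNat r (Nat.factorial N) = ∑ j ∈ Finset.Icc 1 N, padicValNat r j := by
    rw [← Finset.prod_Ico_id_eq_factorial, Finset.Ico_add_one_right_eq_Icc, ← hfa,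
      Nat.factorization_prod (fun x hx => by
        have := (Finset.mem_Icc.mp hx).1; omega)]
    rw [Finset.sum_apply']
    exact Finset.sum_congr rfl fun x _ => hfa x
  -- lower bound on the product valuation
  set P := ∏ i ∈ Finset.Icc 1 (m - 1), (q ^ (2 * i) - 1) with hP
  have hterm_ne : ∀ i ∈ Finset.Icc 1 (m - 1), q ^ (2 * i) - 1 ≠ 0 := by
    intro i hi
    have hi1 := (Finset.mem_Icc.mp hi).1
    have : 1 < q ^ (2 * i) := Nat.one_lt_pow (by omega) hq2
    omega
  have hPfac : padicValNat r P = ∑ i ∈ Finset.Icc 1 (m - 1), padicValNat r (q ^ (2 * i) - 1) := by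
    rw [← hfa, hP, Nat.factorization_prod hterm_ne, Finset.sum_apply']
    exact Finset.sum_congr rfl fun x _ => hfa _
  have himg : (Finset.Icc 1 N).image (fun j => d * j) ⊆ Finset.Icc 1 (m - 1) := by
    intro x hx
    obtain ⟨j, hj, rfl⟩ := Finset.mem_image.mp hx
    obtain ⟨hj1, hjN⟩ := Finset.mem_Icc.mp hj
    refine Finset.mem_Icc.mpr ⟨Nat.mul_pos hd_pos hj1, ?_⟩
    have hdN : d * N ≤ m - 1 := by
      rw [hN, mul_comm]; exact Nat.div_mul_le_self (m - 1) d
    calc d * j ≤ d * N := Nat.mul_le_mul_left d hjN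
      _ ≤ m - 1 := hdN
  have hPlow : c * N + padicValNat r (Nat.factorial N) ≤ padicValNat r P := by
    rw [hPfac, hNfac]
    calc c * N + ∑ j ∈ Finset.Icc 1 N, padicValNat r j
        = ∑ j ∈ Finset.Icc 1 N, (c + padicValNat r j) := by
          rw [Finset.sum_add_distrib, Finset.sum_const, Nat.card_Icc]
          simp [mul_comm]
      _ = ∑ j ∈ Finset.Icc 1 N, padicValNat r (q ^ (2 * (d * j)) - 1) := by
          refine Finset.sum_congr rfl fun j hj => ?_
          have hj1 := (Finset.mem_Icc.mp hj).1
          rw [show 2 * (d * j) = (2 * d) * j by ring, pow_mul, ← ha, key j (by omega)]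
      _ = ∑ i ∈ (Finset.Icc 1 N).image (fun j => d * j),
            padicValNat r (q ^ (2 * i) - 1) := by
          rw [Finset.sum_image]
          intro x _ y _ h
          exact Nat.eq_of_mul_eq_mul_left hd_pos h
      _ ≤ ∑ i ∈ Finset.Icc 1 (m - 1), padicValNat r (q ^ (2 * i) - 1) :=
          Finset.sum_le_sum_of_subset himg
  -- now compare with m!
  suffices h : (Nat.factorial m).factorization r < P.factorization r by
    exact Nat.pow_lt_pow_right hr.one_lt h
  rw [hfa, hfa]
  rcases lt_or_ge m r with hmr | hmr
  · have h0 : padicValNat r (Nat.factorial m) = 0 := by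
      rw [← hfa]; exact Nat.factorization_factorial_eq_zero_of_lt hmr
    rw [h0]
    have : 1 ≤ c * N := Nat.one_le_iff_ne_zero.mpr (by positivity)
    omega
  · set k := m / r with hk
    have hk1 : 1 ≤ k := (Nat.one_le_div_iff hr.pos).mpr hmr
    have hrk : r * k ≤ m := Nat.mul_div_le m r
    have hkN : k + 1 ≤ N := by
      rw [hN, Nat.le_div_iff_mul_le hd_pos]
      have h1 : (k + 1) * (2 * d) ≤ (k + 1) * (r - 1) := Nat.mul_le_mul_left _ hd_le
      have h2 : (k + 1) * (r - 1) ≤ 2 * (m - 1) := by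
        zify [show 1 ≤ r by omega, show 1 ≤ m by omega]
        nlinarith [hrk, hk1, hmr, hr3]
      have h3 : (k + 1) * d * 2 ≤ (m - 1) * 2 := by
        calc (k + 1) * d * 2 = (k + 1) * (2 * d) := by ring
          _ ≤ 2 * (m - 1) := le_trans h1 h2
          _ = (m - 1) * 2 := by ring
      exact Nat.le_of_mul_le_mul_right h3 (by omega)
    have hvm : padicValNat r (Nat.factorial m) = k + padicValNat r (Nat.factorial k) := by
      conv_lhs => rw [← padicValNat_mul_div_factorial m (p := r)]
      rw [← hk, padicValNat_factorial_mul, add_comm]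
    have hmono : padicValNat r (Nat.factorial k) ≤ padicValNat r (Nat.factorial N) := by
      rw [← hfa, ← hfa]
      have hdv : Nat.factorial k ∣ Nat.factorial N := Nat.factorial_dvd_factorial (by omega)
      exact (Nat.factorization_le_iff_dvd (Nat.factorial_ne_zero k)
        (Nat.factorial_ne_zero N)).mpr hdv r
    have hcN : N ≤ c * N := Nat.le_mul_of_pos_left N (by omega)
    omega
end
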